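/- In the setting of the double Dirichlet factorization S(A,B) = D_{N_H}(kA/2) · D_{N_V}(kB/2) with k = 2π/λ: if η₁₁ = 0, η₂₁ = 0, η₁₂ = η₂₂ = η ≠ 0, and |N_H η / λ| = 1, then for all pairs of distinct double-indices (u₁,u₂) ≠ (v₁,v₂) with 0 ≤ u₁,v₁ ≤ M_H−1, 0 ≤ u₂,v₂ ≤ M_V−1, M_H ≤ N_H, M_V ≤ N_V, and |u₂ − v₂| not a multiple of N_H, the correlation S vanishes: S(η(v₂−u₂), η(v₂−u₂)) contributes zero whenever u₂ ≠ v₂. -/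

import Mathlib

open Real Complex

theorem parallel_panels_orthogonality (NH NV MH MV : ℕ)
    (hNH : 1 ≤ NH) (hNV : 1 ≤ NV) (hMH : MH ≤ NH) (hMV : MV ≤ NV)
    (lam η k : ℝ) (hlam : 0 < lam) (hk : k = 2 * π / lam) (hη : η ≠ 0)
    (hcrit : |(NH : ℝ) * η / lam| = 1)
    (u₁ u₂ v₁ v₂ : ℕ)
    (hu₁ : u₁ ≤ MH - 1) (hv₁ : v₁ ≤ MH - 1) (hu₂ : u₂ ≤ MV - 1) (hv₂ : v₂ ≤ MV - 1)
    (hne : (u₁, u₂) ≠ (v₁, v₂)) (hne₂ : u₂ ≠ v₂)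
    (hnd : ¬ (NH : ℤ) ∣ ((u₂ : ℤ) - (v₂ : ℤ))) :
    ∑ n₁ ∈ Finset.range NH, ∑ n₂ ∈ Finset.range NV,
        Complex.exp (Complex.I * k *
          ((η * ((v₂ : ℝ) - (u₂ : ℝ))) * ((n₁ : ℝ) - ((NH : ℝ) - 1) / 2) +
           (η * ((v₂ : ℝ) - (u₂ : ℝ))) * ((n₂ : ℝ) - ((NV : ℝ) - 1) / 2))) = 0 := by
  have hlam' : lam ≠ 0 := ne_of_gt hlam
  have hNH0 : (NH : ℝ) ≠ 0 := Nat.cast_ne_zero.mpr (by omega)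
  obtain ⟨ε, hε, heq⟩ : ∃ ε : ℝ, (ε = 1 ∨ ε = -1) ∧ (NH : ℝ) * η / lam = ε := by
    rcases (abs_eq (by norm_num : (0:ℝ) ≤ 1)).mp hcrit with h | h
    exacts [⟨1, Or.inl rfl, h⟩, ⟨-1, Or.inr rfl, h⟩]
  set Δ : ℤ := (v₂ : ℤ) - u₂ with hΔdef
  obtain ⟨m, hm, hmnd⟩ : ∃ m : ℤ, ε * (Δ : ℝ) = (m : ℝ) ∧ ¬ (NH : ℤ) ∣ m := by
    rcases hε with h | h <;> subst h
    · exact ⟨Δ, by push_cast; ring, fun h => hnd (by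
        rw [show (u₂ : ℤ) - v₂ = -Δ by omega]; exact dvd_neg.mpr h)⟩
    · exact ⟨-Δ, by push_cast; ring, fun h => hnd (by
        rw [show (u₂ : ℤ) - v₂ = -Δ by omega]; simpa using h)⟩
  set a : ℝ := k * (η * ((v₂ : ℝ) - (u₂ : ℝ))) with hadef
  have hηval : η = ε * lam / NH := by field_simp at heq ⊢; linarith
  have hΔr : ((Δ : ℝ)) = (v₂ : ℝ) - (u₂ : ℝ) := by rw [hΔdef]; push_cast; ring
  have hθ : a = 2 * π * m / NH := by
    rw [hadef, hk, hηval, ← hΔr, ← hm]; field_simp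
  have ha : (NH : ℝ) * a = 2 * π * m := by rw [hθ]; field_simp
  set z : ℂ := Complex.exp (Complex.I * (a : ℝ)) with hzdef
  have hz_pow : z ^ NH = 1 := by
    rw [hzdef, ← Complex.exp_nat_mul]
    have hc := congrArg (Complex.ofReal) ha
    push_cast at hc
    rw [show (NH : ℂ) * (Complex.I * (a : ℝ)) = (m : ℤ) * (2 * π * Complex.I) by
      push_cast; linear_combination Complex.I * hc]
    exact Complex.exp_int_mul_two_pi_mul_I m
  have hz_ne : z ≠ 1 := by
    intro h
    obtain ⟨n, hn⟩ := Complex.exp_eq_one_iff.mp h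
    have h2 : ((a : ℝ) : ℂ) = ((n * (2 * π) : ℝ) : ℂ) := by
      push_cast
      have := mul_left_cancel₀ Complex.I_ne_zero
        (by linear_combination hn : Complex.I * (a : ℝ) = Complex.I * ((n : ℂ) * (2 * π)))
      exact this
    have h3 : a = n * (2 * π) := Complex.ofReal_inj.mp h2
    rw [hθ] at h3
    have hπ : (π : ℝ) ≠ 0 := Real.pi_ne_zero
    have hcan : (2 * π) * (m : ℝ) = (2 * π) * ((n : ℝ) * NH) := by
      field_simp at h3; linear_combination (2 * π) * h3
    have : (m : ℝ) = (n : ℝ) * NH :=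
      mul_left_cancel₀ (by positivity : (2 * π : ℝ) ≠ 0) hcan
    have hmn : m = n * NH := by exact_mod_cast this
    exact hmnd ⟨n, by rw [hmn]; ring⟩
  have hgeom : ∑ i ∈ Finset.range NH, z ^ i = 0 := by
    rw [geom_sum_eq hz_ne, hz_pow]
    simp
  rw [Finset.sum_comm]
  refine Finset.sum_eq_zero fun n₂ _ => ?_
  have hsplit : ∀ n₁ : ℕ,
      Complex.exp (Complex.I * k *
        ((η * ((v₂ : ℝ) - (u₂ : ℝ))) * ((n₁ : ℝ) - ((NH : ℝ) - 1) / 2) +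
         (η * ((v₂ : ℝ) - (u₂ : ℝ))) * ((n₂ : ℝ) - ((NV : ℝ) - 1) / 2)))
      = z ^ n₁ * Complex.exp (Complex.I * k *
          ((η * ((v₂ : ℝ) - (u₂ : ℝ))) * (- ((NH : ℝ) - 1) / 2) +
           (η * ((v₂ : ℝ) - (u₂ : ℝ))) * ((n₂ : ℝ) - ((NV : ℝ) - 1) / 2))) := by
    intro n₁
    rw [hzdef, ← Complex.exp_nat_mul, ← Complex.exp_add]
    congr 1
    rw [hadef]
    push_cast
    ring
  calc ∑ n₁ ∈ Finset.range NH, Complex.exp (Complex.I * k *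
          ((η * ((v₂ : ℝ) - (u₂ : ℝ))) * ((n₁ : ℝ) - ((NH : ℝ) - 1) / 2) +
           (η * ((v₂ : ℝ) - (u₂ : ℝ))) * ((n₂ : ℝ) - ((NV : ℝ) - 1) / 2)))
      = ∑ n₁ ∈ Finset.range NH, z ^ n₁ * Complex.exp (Complex.I * k *
          ((η * ((v₂ : ℝ) - (u₂ : ℝ))) * (- ((NH : ℝ) - 1) / 2) +
           (η * ((v₂ : ℝ) - (u₂ : ℝ))) * ((n₂ : ℝ) - ((NV : ℝ) - 1) / 2))) :=
        Finset.sum_congr rfl fun n₁ _ => hsplit n₁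
    _ = 0 := by rw [← Finset.sum_mul, hgeom, zero_mul]
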